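/- arXiv:1707.07368 — 3 statements merged into one kernel-verified Lean document; each statement's English description precedes it below -/
import Mathlib

section
/- Let H be a complex inner product space of dimension at least 2, let |0⟩, |1⟩ be orthonormal vectors in H, let |+⟩ = (|0⟩+|1⟩)/√2, and let A = |0⟩⟨0| and B = |+⟩⟨+|. Then there is no self-adjoint operator H₀ on H such that H₀, A - H₀, B - H₀, and I - A - B + H₀ are all positive semidefinite. -/
open ComplexOrder Matrix

lemma vecMulVec_mulVec' {n : ℕ} (v w x : Fin n → ℂ) :
    vecMulVec v w *ᵥ x = (w ⬝ᵥ x) • v := by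
  funext i
  simp [mulVec, vecMulVec_apply, dotProduct, Finset.mul_sum, mul_comm, mul_assoc, mul_left_comm]

/-- with `A = |0⟩⟨0|` and `B = |+⟩⟨+|` (for orthonormal `|0⟩, |1⟩` and
`|+⟩ = (|0⟩+|1⟩)/√2`) in a space of dimension ≥ 2, there is no self-adjoint `H₀` with
`H₀`, `A - H₀`, `B - H₀` and `I - A - B + H₀` all positive semidefinite. -/
theorem no_common_lower_bound {n : ℕ} (hn : 2 ≤ n)
    (v₀ v₁ : Fin n → ℂ)
    (h₀ : star v₀ ⬝ᵥ v₀ = 1) (h₁ : star v₁ ⬝ᵥ v₁ = 1) (horth : star v₀ ⬝ᵥ v₁ = 0) :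
    ¬ ∃ H₀ : Matrix (Fin n) (Fin n) ℂ,
        H₀.PosSemidef ∧
        (vecMulVec v₀ (star v₀) - H₀).PosSemidef ∧
        (vecMulVec ((Real.sqrt 2 : ℂ)⁻¹ • (v₀ + v₁)) (star ((Real.sqrt 2 : ℂ)⁻¹ • (v₀ + v₁))) - H₀).PosSemidef ∧
        (1 - vecMulVec v₀ (star v₀)
           - vecMulVec ((Real.sqrt 2 : ℂ)⁻¹ • (v₀ + v₁)) (star ((Real.sqrt 2 : ℂ)⁻¹ • (v₀ + v₁)))
           + H₀).PosSemidef := by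
  rintro ⟨H, hH, hA, hB, hI⟩
  have h₁₀ : star v₁ ⬝ᵥ v₀ = 0 := by
    have := congrArg star horth
    rw [star_dotProduct] at this
    simpa using this
  set A : Matrix (Fin n) (Fin n) ℂ := vecMulVec v₀ (star v₀) with hAdef
  set p : Fin n → ℂ := (Real.sqrt 2 : ℂ)⁻¹ • (v₀ + v₁) with hpdef
  set B : Matrix (Fin n) (Fin n) ℂ := vecMulVec p (star p) with hBdef
  -- step 1 : H *ᵥ v₁ = 0
  have hAv₁ : A *ᵥ v₁ = 0 := by
    rw [hAdef, vecMulVec_mulVec', horth, zero_smul]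
  have hq₁ : star v₁ ⬝ᵥ H *ᵥ v₁ = 0 := by
    have u := hH.dotProduct_mulVec_nonneg v₁
    have d := hA.dotProduct_mulVec_nonneg v₁
    rw [sub_mulVec, hAv₁, zero_sub, dotProduct_neg, le_neg] at d
    exact le_antisymm (by simpa using d) u
  have hHv₁ : H *ᵥ v₁ = 0 := (hH.dotProduct_mulVec_zero_iff v₁).mp hq₁
  -- step 2 : H *ᵥ (v₀ - v₁) = 0
  have hBw : B *ᵥ (v₀ - v₁) = 0 := by
    rw [hBdef, vecMulVec_mulVec', hpdef]
    have : star ((Real.sqrt 2 : ℂ)⁻¹ • (v₀ + v₁)) ⬝ᵥ (v₀ - v₁) = 0 := by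
      simp [star_smul, smul_dotProduct, dotProduct_sub, add_dotProduct, star_add,
        h₀, h₁, horth, h₁₀]
    rw [this, zero_smul]
  have hqw : star (v₀ - v₁) ⬝ᵥ H *ᵥ (v₀ - v₁) = 0 := by
    have u := hH.dotProduct_mulVec_nonneg (v₀ - v₁)
    have d := hB.dotProduct_mulVec_nonneg (v₀ - v₁)
    rw [sub_mulVec, hBw, zero_sub, dotProduct_neg, le_neg] at d
    exact le_antisymm (by simpa using d) u
  have hHw : H *ᵥ (v₀ - v₁) = 0 := (hH.dotProduct_mulVec_zero_iff _).mp hqw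
  have hHv₀ : H *ᵥ v₀ = 0 := by
    have := hHw
    rw [mulVec_sub, hHv₁, sub_zero] at this
    exact this
  -- step 3 : test vector u = v₀ + (√2 - 1) • v₁
  set y : ℂ := (Real.sqrt 2 : ℝ) - 1 with hydef
  set u : Fin n → ℂ := v₀ + y • v₁ with hudef
  have hIu := hI.dotProduct_mulVec_nonneg u
  have hHu : H *ᵥ u = 0 := by
    rw [hudef, mulVec_add, mulVec_smul, hHv₀, hHv₁, smul_zero, add_zero]
  have s2 : ((Real.sqrt 2 : ℝ) : ℂ) * ((Real.sqrt 2 : ℝ) : ℂ) = 2 := by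
    rw [← Complex.ofReal_mul, Real.mul_self_sqrt (by norm_num : (0:ℝ) ≤ 2)]
    norm_num
  have hval : star u ⬝ᵥ (1 - A - B + H) *ᵥ u
      = ((2 - 2 * Real.sqrt 2 : ℝ) : ℂ) := by
    rw [add_mulVec, sub_mulVec, sub_mulVec, one_mulVec, hHu, hAdef, hBdef,
      vecMulVec_mulVec', vecMulVec_mulVec', hpdef, hudef]
    have hsy : star y = y := by rw [hydef]; simp
    simp only [star_add, star_smul, hsy, dotProduct_add, add_dotProduct,
      dotProduct_smul, smul_dotProduct, dotProduct_sub, sub_dotProduct,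
      dotProduct_zero, star_smul, star_inv₀, Complex.star_def, Complex.conj_ofReal,
      smul_eq_mul, h₀, h₁, horth, h₁₀, smul_smul, dotProduct_smul]
    push_cast
    have : ((Real.sqrt 2 : ℝ) : ℂ) ≠ 0 := by
      norm_cast
      positivity
    field_simp
    ring_nf
    linear_combination (((Real.sqrt 2 : ℝ) : ℂ))^2 * s2
  rw [hval] at hIu
  have : (0:ℝ) ≤ 2 - 2 * Real.sqrt 2 := by exact_mod_cast hIu
  nlinarith [Real.sqrt_nonneg 2, Real.sq_sqrt (by norm_num : (0:ℝ) ≤ 2)]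
end

section
/- Let H be a finite-dimensional complex inner product space with dim H ≥ 2. There do not exist a measurable space Λ, a convex-linear map μ from density operators on H to probability measures on Λ, and a map F from rank-1 orthogonal projections on H to measurable functions Λ → [0,1], such that Tr(ρE) = ∫_Λ F(E) dμ(ρ) for every density operator ρ and every rank-1 projection E. -/
open MeasureTheory ComplexOrder Matrix

/-- A density operator: a positive semidefinite matrix of trace 1. -/
def IsDensityOperator {n : ℕ} (ρ : Matrix (Fin n) (Fin n) ℂ) : Prop :=
  ρ.PosSemidef ∧ ρ.trace = 1

/-- A rank-1 orthogonal projection. -/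
def IsRankOneProjection {n : ℕ} (E : Matrix (Fin n) (Fin n) ℂ) : Prop :=
  E.IsHermitian ∧ E * E = E ∧ E.rank = 1

namespace NoGoAux
variable {n : ℕ}

noncomputable def cvec (n : ℕ) (a b : ℝ) : Fin n → ℂ :=
  fun k => if (k : ℕ) = 0 then (a : ℂ) else if (k : ℕ) = 1 then (b : ℂ) else 0

noncomputable def proj (v : Fin n → ℂ) : Matrix (Fin n) (Fin n) ℂ := vecMulVec v (star v)

lemma sum_two {M : Type*} [AddCommMonoid M] (hn : 2 ≤ n) (A B : M) :
    (∑ k : Fin n, (if (k : ℕ) = 0 then A else if (k : ℕ) = 1 then B else 0)) = A + B := by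
  have h0 : (0 : ℕ) < n := by omega
  have h1 : (1 : ℕ) < n := by omega
  set i0 : Fin n := ⟨0, h0⟩
  set i1 : Fin n := ⟨1, h1⟩
  have hne : i0 ≠ i1 := by simp [i0, i1, Fin.ext_iff]
  rw [← Finset.sum_subset (Finset.subset_univ {i0, i1})]
  · rw [Finset.sum_pair hne]
    simp [i0, i1]
  · intro k _ hk
    simp only [Finset.mem_insert, Finset.mem_singleton] at hk
    push_neg at hk
    have : (k : ℕ) ≠ 0 := fun h => hk.1 (Fin.ext h)
    have : (k : ℕ) ≠ 1 := fun h => hk.2 (Fin.ext h)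
    simp_all

lemma dot_cvec (hn : 2 ≤ n) (a b c d : ℝ) :
    star (cvec n a b) ⬝ᵥ cvec n c d = ((a * c + b * d : ℝ) : ℂ) := by
  have hk : ∀ k : Fin n, star (cvec n a b k) * cvec n c d k
      = (if (k : ℕ) = 0 then ((a * c : ℝ) : ℂ) else if (k : ℕ) = 1 then ((b * d : ℝ) : ℂ) else 0) := by
    intro k
    simp only [cvec]
    split_ifs <;> simp [Complex.conj_ofReal]
  calc star (cvec n a b) ⬝ᵥ cvec n c d
      = ∑ k : Fin n, (if (k : ℕ) = 0 then ((a * c : ℝ) : ℂ) else if (k : ℕ) = 1 then ((b * d : ℝ) : ℂ) else 0) := by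
        refine Finset.sum_congr rfl fun k _ => hk k
    _ = ((a * c : ℝ) : ℂ) + ((b * d : ℝ) : ℂ) := sum_two hn _ _
    _ = _ := by push_cast; ring

lemma proj_mul_proj (u v : Fin n → ℂ) :
    proj u * proj v = (star u ⬝ᵥ v) • vecMulVec u (star v) := by
  ext i j
  simp only [proj, mul_apply, vecMulVec_apply, Matrix.smul_apply, dotProduct, Pi.star_apply,
    smul_eq_mul, Finset.sum_mul, Finset.mul_sum]
  refine Finset.sum_congr rfl fun k _ => by ring

lemma trace_vmv (u v : Fin n → ℂ) : (vecMulVec u (star v)).trace = star v ⬝ᵥ u := by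
  simp [trace, vecMulVec_apply, dotProduct, mul_comm, Matrix.diag]

lemma proj_herm (v : Fin n → ℂ) : (proj v).IsHermitian := by
  ext i j
  simp [proj, conjTranspose_apply, vecMulVec_apply, mul_comm]

lemma proj_psd (v : Fin n → ℂ) : (proj v).PosSemidef := by
  refine .of_dotProduct_mulVec_nonneg (proj_herm v) fun x => ?_
  have h1 : star x ⬝ᵥ (proj v).mulVec x = (star x ⬝ᵥ v) * (star v ⬝ᵥ x) := by
    simp only [proj, mulVec, dotProduct, vecMulVec_apply, Pi.star_apply, Finset.mul_sum,
      Finset.sum_mul]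
    rw [Finset.sum_comm]
    refine Finset.sum_congr rfl fun k _ => Finset.sum_congr rfl fun l _ => by ring
  rw [h1]
  have h2 : (star x ⬝ᵥ v) = star ((star v) ⬝ᵥ x) := by simp [dotProduct, mul_comm]
  rw [h2]
  exact star_mul_self_nonneg _

lemma rank_pos_of_ne_zero (A : Matrix (Fin n) (Fin n) ℂ) (hA : A ≠ 0) : 0 < A.rank := by
  rw [Matrix.rank, Module.finrank_pos_iff, Submodule.nontrivial_iff_ne_bot, ne_eq,
    LinearMap.range_eq_bot]
  intro h
  apply hA
  ext i j
  have h1 : A.mulVec (Pi.single j 1) = 0 := by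
    have := congrFun (congrArg DFunLike.coe h) (Pi.single j 1)
    simpa [Matrix.mulVecLin] using this
  have := congrFun h1 i
  simpa [mulVec_single] using this

lemma rank_vmv_le_one (w v : Fin n → ℂ) : (vecMulVec w v).rank ≤ 1 := by
  rw [vecMulVec_eq (Fin 1)]
  calc (replicateCol (Fin 1) w * replicateRow (Fin 1) v).rank ≤ (replicateCol (Fin 1) w).rank := rank_mul_le_left _ _
    _ ≤ 1 := by simpa using rank_le_card_width (replicateCol (Fin 1) w)

lemma trace_proj (hn : 2 ≤ n) (a b : ℝ) (h : a ^ 2 + b ^ 2 = 1) :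
    (proj (cvec n a b)).trace = 1 := by
  rw [proj, trace_vmv, dot_cvec hn]
  have : a * a + b * b = 1 := by nlinarith
  rw [this]; simp

lemma trace_proj_mul (hn : 2 ≤ n) (a b c d : ℝ) :
    (proj (cvec n a b) * proj (cvec n c d)).trace = (((a * c + b * d) ^ 2 : ℝ) : ℂ) := by
  rw [proj_mul_proj, trace_smul, trace_vmv, dot_cvec hn, dot_cvec hn]
  simp only [smul_eq_mul]
  push_cast
  ring

lemma density_proj (hn : 2 ≤ n) (a b : ℝ) (h : a ^ 2 + b ^ 2 = 1) :
    IsDensityOperator (proj (cvec n a b)) :=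
  ⟨proj_psd _, trace_proj hn a b h⟩

lemma rankOne_proj (hn : 2 ≤ n) (a b : ℝ) (h : a ^ 2 + b ^ 2 = 1) :
    IsRankOneProjection (proj (cvec n a b)) := by
  refine ⟨proj_herm _, ?_, ?_⟩
  · rw [proj_mul_proj, dot_cvec hn]
    have : a * a + b * b = 1 := by nlinarith
    rw [this]
    simp [proj]
  · refine le_antisymm (rank_vmv_le_one _ _) ?_
    refine rank_pos_of_ne_zero _ fun h0 => ?_
    have := trace_proj hn a b h
    rw [h0] at this
    simp at this

lemma mix_eq (a b : ℝ) (h : a ^ 2 + b ^ 2 = 1) :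
    (1 / 2 : ℝ) • proj (cvec n a b) + (1 / 2 : ℝ) • proj (cvec n (-b) a)
      = (1 / 2 : ℝ) • proj (cvec n 1 0) + (1 / 2 : ℝ) • proj (cvec n 0 1) := by
  have h' : ((a : ℂ)) ^ 2 + ((b : ℂ)) ^ 2 = 1 := by
    exact_mod_cast congrArg (fun x : ℝ => (x : ℂ)) h
  ext i j
  simp only [proj, Matrix.add_apply, Matrix.smul_apply, vecMulVec_apply, Pi.star_apply, cvec, smul_eq_mul]
  split_ifs
  all_goals simp only [Complex.star_def, Complex.conj_ofReal, Complex.ofReal_neg,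
    Complex.ofReal_one, Complex.ofReal_zero, _root_.map_zero, _root_.map_one, map_neg,
    Complex.real_smul, Complex.ofReal_div]
  all_goals push_cast
  all_goals try ring
  all_goals linear_combination h' / 2

lemma smul_psd (c : ℝ) (hc : 0 ≤ c) {A : Matrix (Fin n) (Fin n) ℂ} (hA : A.PosSemidef) :
    (c • A).PosSemidef := by
  have hEq : c • A = ((c : ℂ)) • A := by
    ext i j; simp [Complex.real_smul]
  rw [hEq]
  refine .of_dotProduct_mulVec_nonneg ?_ fun x => ?_
  · have hH := hA.1
    unfold Matrix.IsHermitian at *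
    rw [conjTranspose_smul, hH]
    congr 1
    simp [Complex.conj_ofReal]
  · rw [smul_mulVec, dotProduct_smul]
    have h1 : (0 : ℂ) ≤ (c : ℂ) := by
      rw [Complex.le_def]; simp [hc]
    have h2 := hA.dotProduct_mulVec_nonneg x
    calc (0:ℂ) = (c:ℂ) * 0 := by ring
      _ ≤ (c:ℂ) * (star x ⬝ᵥ A.mulVec x) := mul_le_mul_of_nonneg_left h2 h1
      _ = (c:ℂ) • (star x ⬝ᵥ A.mulVec x) := by simp [smul_eq_mul]

section Measure
variable {Λ : Type} [MeasurableSpace Λ]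

lemma integrable_of_bdd {m : Measure Λ} [IsFiniteMeasure m] {f : Λ → ℝ}
    (hf : Measurable f) (h0 : ∀ x, 0 ≤ f x) (h1 : ∀ x, f x ≤ 1) : Integrable f m := by
  refine Integrable.mono' (integrable_const 1) hf.aestronglyMeasurable ?_
  filter_upwards with x
  rw [Real.norm_eq_abs, abs_le]
  exact ⟨by linarith [h0 x], h1 x⟩

lemma key (ν m m' : Measure Λ) [IsProbabilityMeasure m] [IsProbabilityMeasure m']
    (hν : ν = (ENNReal.ofReal (1 / 2 : ℝ)) • m + (ENNReal.ofReal (1 / 2 : ℝ)) • m')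
    (f g : Λ → ℝ) (hf : Measurable f) (hg : Measurable g)
    (hf0 : ∀ x, 0 ≤ f x) (hf1 : ∀ x, f x ≤ 1) (hg0 : ∀ x, 0 ≤ g x) (hg1 : ∀ x, g x ≤ 1)
    (h1 : ∫ x, f x ∂m = 1) (h0 : ∫ x, f x ∂m' = 0) :
    ∫ x, f x * g x ∂ν = (1 / 2) * ∫ x, g x ∂m := by
  have hfg : Measurable fun x => f x * g x := hf.mul hg
  have hfg0 : ∀ x, 0 ≤ f x * g x := fun x => mul_nonneg (hf0 x) (hg0 x)
  have hfg1 : ∀ x, f x * g x ≤ 1 := fun x =>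
    le_trans (mul_le_mul_of_nonneg_left (hg1 x) (hf0 x)) (by simpa using hf1 x)
  have int_fg_m : Integrable (fun x => f x * g x) m := integrable_of_bdd hfg hfg0 hfg1
  have int_fg_m' : Integrable (fun x => f x * g x) m' := integrable_of_bdd hfg hfg0 hfg1
  have int_f_m : Integrable f m := integrable_of_bdd hf hf0 hf1
  have int_f_m' : Integrable f m' := integrable_of_bdd hf hf0 hf1
  have int_g_m : Integrable g m := integrable_of_bdd hg hg0 hg1
  have step1 : ∫ x, f x * g x ∂m = ∫ x, g x ∂m := by
    have e1 : ∫ x, (g x - f x * g x) ∂m = ∫ x, g x ∂m - ∫ x, f x * g x ∂m :=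
      integral_sub int_g_m int_fg_m
    have e2 : ∫ x, (1 - f x) ∂m = 0 := by
      rw [integral_sub (integrable_const 1) int_f_m]
      simp [h1]
    have le1 : ∫ x, (g x - f x * g x) ∂m ≤ ∫ x, (1 - f x) ∂m := by
      refine integral_mono (int_g_m.sub int_fg_m) ((integrable_const 1).sub int_f_m) fun x => ?_
      show g x - f x * g x ≤ 1 - f x
      nlinarith [hf0 x, hf1 x, hg0 x, hg1 x]
    have ge1 : 0 ≤ ∫ x, (g x - f x * g x) ∂m := by
      refine integral_nonneg fun x => ?_
      show 0 ≤ g x - f x * g x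
      nlinarith [hf0 x, hf1 x, hg0 x, hg1 x]
    rw [e2] at le1
    rw [e1] at le1 ge1
    linarith
  have step2 : ∫ x, f x * g x ∂m' = 0 := by
    have le2 : ∫ x, f x * g x ∂m' ≤ ∫ x, f x ∂m' := by
      refine integral_mono int_fg_m' int_f_m' fun x => ?_
      show f x * g x ≤ f x
      nlinarith [hf0 x, hf1 x, hg0 x, hg1 x]
    have ge2 : 0 ≤ ∫ x, f x * g x ∂m' := integral_nonneg hfg0
    rw [h0] at le2
    linarith
  rw [hν, integral_add_measure (int_fg_m.smul_measure (by simp)) (int_fg_m'.smul_measure (by simp)),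
    integral_smul_measure, integral_smul_measure, ENNReal.toReal_ofReal (by norm_num), step1, step2]
  simp

end Measure
end NoGoAux

set_option maxHeartbeats 1000000 in
open NoGoAux in
/-- Expectation no-go theorem: for `dim H ≥ 2` there is no expectation
representation: no measurable space `Λ`, convex-linear map `μ` from density operators
to probability measures on `Λ`, and map `F` from rank-1 projections to measurable
functions `Λ → [0,1]` with `Tr(ρE) = ∫ F(E) dμ(ρ)` for all density `ρ` and rank-1
projections `E`. -/
theorem expectation_no_go {n : ℕ} (hn : 2 ≤ n) :
    ¬ ∃ (Λ : Type) (_ : MeasurableSpace Λ)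
        (μ : Matrix (Fin n) (Fin n) ℂ → Measure Λ)
        (F : Matrix (Fin n) (Fin n) ℂ → Λ → ℝ),
        (∀ ρ, IsDensityOperator ρ → IsProbabilityMeasure (μ ρ)) ∧
        (∀ (a : ℝ) (ρ₁ ρ₂ : Matrix (Fin n) (Fin n) ℂ), 0 ≤ a → a ≤ 1 →
          IsDensityOperator ρ₁ → IsDensityOperator ρ₂ →
          μ (a • ρ₁ + (1 - a) • ρ₂)
            = (ENNReal.ofReal a) • μ ρ₁ + (ENNReal.ofReal (1 - a)) • μ ρ₂) ∧
        (∀ E, IsRankOneProjection E →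
          Measurable (F E) ∧ ∀ lam, F E lam ∈ Set.Icc (0 : ℝ) 1) ∧
        (∀ ρ E, IsDensityOperator ρ → IsRankOneProjection E →
          (ρ * E).trace = ((∫ lam, F E lam ∂(μ ρ) : ℝ) : ℂ)) := by
  rintro ⟨Λ, mΛ, μ, F, hprob, hconv, hF, htr⟩
  -- the fixed mixed state
  set T : Matrix (Fin n) (Fin n) ℂ :=
    (1 / 2 : ℝ) • proj (cvec n 1 0) + (1 / 2 : ℝ) • proj (cvec n 0 1) with hT_def
  have h10 : (1 : ℝ) ^ 2 + (0 : ℝ) ^ 2 = 1 := by norm_num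
  have h01 : (0 : ℝ) ^ 2 + (1 : ℝ) ^ 2 = 1 := by norm_num
  have hT : IsDensityOperator T := by
    constructor
    · exact (smul_psd _ (by norm_num) (proj_psd _)).add (smul_psd _ (by norm_num) (proj_psd _))
    · rw [hT_def, trace_add, trace_smul, trace_smul, trace_proj hn 1 0 h10,
        trace_proj hn 0 1 h01]
      simp [Complex.real_smul]
      norm_num
  haveI : IsProbabilityMeasure (μ T) := hprob T hT
  -- mixture identity for measures
  have hν : ∀ a b : ℝ, a ^ 2 + b ^ 2 = 1 →
      μ T = (ENNReal.ofReal (1 / 2 : ℝ)) • μ (proj (cvec n a b))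
        + (ENNReal.ofReal (1 / 2 : ℝ)) • μ (proj (cvec n (-b) a)) := by
    intro a b hab
    have hba : (-b) ^ 2 + a ^ 2 = 1 := by nlinarith
    have h' := hconv (1 / 2) (proj (cvec n a b)) (proj (cvec n (-b) a)) (by norm_num)
      (by norm_num) (density_proj hn a b hab) (density_proj hn (-b) a hba)
    have e : (1 - 1 / 2 : ℝ) = 1 / 2 := by norm_num
    rw [e] at h'
    rw [mix_eq a b hab] at h'
    rw [hT_def]
    exact h'
  -- expectation values
  have hexp : ∀ a b c d : ℝ, a ^ 2 + b ^ 2 = 1 → c ^ 2 + d ^ 2 = 1 →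
      ∫ x, F (proj (cvec n c d)) x ∂(μ (proj (cvec n a b))) = (a * c + b * d) ^ 2 := by
    intro a b c d hab hcd
    have h := htr (proj (cvec n a b)) (proj (cvec n c d)) (density_proj hn a b hab)
      (rankOne_proj hn c d hcd)
    rw [trace_proj_mul hn] at h
    exact_mod_cast h.symm
  -- the key joint-integral formula
  have hkey : ∀ a b c d : ℝ, a ^ 2 + b ^ 2 = 1 → c ^ 2 + d ^ 2 = 1 →
      ∫ x, F (proj (cvec n a b)) x * F (proj (cvec n c d)) x ∂(μ T)
        = (1 / 2) * (a * c + b * d) ^ 2 := by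
    intro a b c d hab hcd
    have hba : (-b) ^ 2 + a ^ 2 = 1 := by nlinarith
    haveI : IsProbabilityMeasure (μ (proj (cvec n a b))) :=
      hprob _ (density_proj hn a b hab)
    haveI : IsProbabilityMeasure (μ (proj (cvec n (-b) a))) :=
      hprob _ (density_proj hn (-b) a hba)
    obtain ⟨hfm, hfb⟩ := hF _ (rankOne_proj hn a b hab)
    obtain ⟨hgm, hgb⟩ := hF _ (rankOne_proj hn c d hcd)
    have h1 : ∫ x, F (proj (cvec n a b)) x ∂(μ (proj (cvec n a b))) = 1 := by
      rw [hexp a b a b hab hab]; nlinarith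
    have h0 : ∫ x, F (proj (cvec n a b)) x ∂(μ (proj (cvec n (-b) a))) = 0 := by
      rw [hexp (-b) a a b hba hab]; ring_nf
    rw [key (μ T) (μ (proj (cvec n a b))) (μ (proj (cvec n (-b) a))) (hν a b hab)
      _ _ hfm hgm (fun x => (hfb x).1) (fun x => (hfb x).2) (fun x => (hgb x).1)
      (fun x => (hgb x).2) h1 h0, hexp a b c d hab hcd]
  -- single-integral formula
  have hone : ∀ a b : ℝ, a ^ 2 + b ^ 2 = 1 →
      ∫ x, F (proj (cvec n a b)) x ∂(μ T) = 1 / 2 := by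
    intro a b hab
    have hba : (-b) ^ 2 + a ^ 2 = 1 := by nlinarith
    haveI : IsProbabilityMeasure (μ (proj (cvec n a b))) :=
      hprob _ (density_proj hn a b hab)
    haveI : IsProbabilityMeasure (μ (proj (cvec n (-b) a))) :=
      hprob _ (density_proj hn (-b) a hba)
    obtain ⟨hfm, hfb⟩ := hF _ (rankOne_proj hn a b hab)
    have h1 : ∫ x, F (proj (cvec n a b)) x ∂(μ (proj (cvec n a b))) = 1 := by
      rw [hexp a b a b hab hab]; nlinarith
    have h0 : ∫ x, F (proj (cvec n a b)) x ∂(μ (proj (cvec n (-b) a))) = 0 := by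
      rw [hexp (-b) a a b hba hab]; ring_nf
    have hk := key (μ T) (μ (proj (cvec n a b))) (μ (proj (cvec n (-b) a))) (hν a b hab)
      (F (proj (cvec n a b))) (fun _ => 1) hfm measurable_const
      (fun x => (hfb x).1) (fun x => (hfb x).2) (fun _ => zero_le_one) (fun _ => le_refl 1)
      h1 h0
    simp only [mul_one, integral_const, measure_univ, ENNReal.toReal_one, probReal_univ, smul_eq_mul] at hk
    linarith [hk]
  -- the three directions
  set s : ℝ := Real.sqrt 3 with hs_def
  have hs : s ^ 2 = 3 := Real.sq_sqrt (by norm_num)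
  have hv1 : (s / 2) ^ 2 + (1 / 2 : ℝ) ^ 2 = 1 := by nlinarith
  have hv2 : (1 / 2 : ℝ) ^ 2 + (s / 2) ^ 2 = 1 := by nlinarith
  set f0 := F (proj (cvec n 1 0)) with hf0_def
  set f1 := F (proj (cvec n (s / 2) (1 / 2))) with hf1_def
  set f2 := F (proj (cvec n (1 / 2) (s / 2))) with hf2_def
  obtain ⟨hm0, hb0⟩ := hF _ (rankOne_proj hn 1 0 h10)
  obtain ⟨hm1, hb1⟩ := hF _ (rankOne_proj hn (s / 2) (1 / 2) hv1)
  obtain ⟨hm2, hb2⟩ := hF _ (rankOne_proj hn (1 / 2) (s / 2) hv2)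
  have A01 : ∫ x, f0 x * f1 x ∂(μ T) = 3 / 8 := by
    rw [hf0_def, hf1_def, hkey 1 0 (s / 2) (1 / 2) h10 hv1]; nlinarith
  have A12 : ∫ x, f1 x * f2 x ∂(μ T) = 3 / 8 := by
    rw [hf1_def, hf2_def, hkey (s / 2) (1 / 2) (1 / 2) (s / 2) hv1 hv2]; nlinarith
  have A02 : ∫ x, f0 x * f2 x ∂(μ T) = 1 / 8 := by
    rw [hf0_def, hf2_def, hkey 1 0 (1 / 2) (s / 2) h10 hv2]; nlinarith
  have B0 : ∫ x, f0 x ∂(μ T) = 1 / 2 := hone 1 0 h10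
  have B1 : ∫ x, f1 x ∂(μ T) = 1 / 2 := hone (s / 2) (1 / 2) hv1
  -- integrabilities over μ T
  have i0 : Integrable f0 (μ T) := integrable_of_bdd hm0 (fun x => (hb0 x).1) (fun x => (hb0 x).2)
  have i1 : Integrable f1 (μ T) := integrable_of_bdd hm1 (fun x => (hb1 x).1) (fun x => (hb1 x).2)
  have i01 : Integrable (fun x => f0 x * f1 x) (μ T) :=
    integrable_of_bdd (hm0.mul hm1) (fun x => mul_nonneg (hb0 x).1 (hb1 x).1)
      (fun x => by nlinarith [(hb0 x).1, (hb0 x).2, (hb1 x).1, (hb1 x).2])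
  have i12 : Integrable (fun x => f1 x * f2 x) (μ T) :=
    integrable_of_bdd (hm1.mul hm2) (fun x => mul_nonneg (hb1 x).1 (hb2 x).1)
      (fun x => by nlinarith [(hb1 x).1, (hb1 x).2, (hb2 x).1, (hb2 x).2])
  have i02 : Integrable (fun x => f0 x * f2 x) (μ T) :=
    integrable_of_bdd (hm0.mul hm2) (fun x => mul_nonneg (hb0 x).1 (hb2 x).1)
      (fun x => by nlinarith [(hb0 x).1, (hb0 x).2, (hb2 x).1, (hb2 x).2])
  -- the triangle inequality for integrals
  have mono : ∫ x, (f0 x - f0 x * f2 x) ∂(μ T)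
      ≤ ∫ x, ((f0 x - f0 x * f1 x) + (f1 x - f1 x * f2 x)) ∂(μ T) := by
    refine integral_mono (i0.sub i02) ((i0.sub i01).add (i1.sub i12)) fun x => ?_
    show f0 x - f0 x * f2 x ≤ (f0 x - f0 x * f1 x) + (f1 x - f1 x * f2 x)
    nlinarith [(hb0 x).1, (hb0 x).2, (hb1 x).1, (hb1 x).2, (hb2 x).1, (hb2 x).2,
      mul_nonneg (mul_nonneg (sub_nonneg.2 (hb1 x).2) (hb0 x).1) (hb2 x).1,
      mul_nonneg (mul_nonneg (hb1 x).1 (sub_nonneg.2 (hb0 x).2)) (sub_nonneg.2 (hb2 x).2)]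
  have hL : ∫ x, (f0 x - f0 x * f2 x) ∂(μ T)
      = (∫ x, f0 x ∂(μ T)) - ∫ x, f0 x * f2 x ∂(μ T) := integral_sub i0 i02
  have hR : ∫ x, ((f0 x - f0 x * f1 x) + (f1 x - f1 x * f2 x)) ∂(μ T)
      = (∫ x, (f0 x - f0 x * f1 x) ∂(μ T)) + ∫ x, (f1 x - f1 x * f2 x) ∂(μ T) :=
    integral_add (i0.sub i01) (i1.sub i12)
  have hR1 : ∫ x, (f0 x - f0 x * f1 x) ∂(μ T)
      = (∫ x, f0 x ∂(μ T)) - ∫ x, f0 x * f1 x ∂(μ T) := integral_sub i0 i01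
  have hR2 : ∫ x, (f1 x - f1 x * f2 x) ∂(μ T)
      = (∫ x, f1 x ∂(μ T)) - ∫ x, f1 x * f2 x ∂(μ T) := integral_sub i1 i12
  rw [hL, hR, hR1, hR2, A01, A12, A02, B0, B1] at mono
  linarith
end

section
/- Let H be a closed subspace of a Hilbert space H'. If there exists an expectation representation (Λ, μ, F) for H', then there exists an expectation representation for H. -/
open MeasureTheory ComplexOrder
open scoped InnerProductSpace

/-- A density operator on an inner product space: positive, symmetric, trace 1. -/
def DensityOp {E : Type*} [NormedAddCommGroup E] [InnerProductSpace ℂ E]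
    (ρ : E →ₗ[ℂ] E) : Prop :=
  ρ.IsSymmetric ∧ (∀ x : E, 0 ≤ ⟪x, ρ x⟫_ℂ) ∧ LinearMap.trace ℂ E ρ = 1

/-- A rank-1 orthogonal projection `|v⟩⟨v|` for a unit vector `v`. -/
def RankOneProj {E : Type*} [NormedAddCommGroup E] [InnerProductSpace ℂ E]
    (P : E →ₗ[ℂ] E) : Prop :=
  ∃ v : E, ‖v‖ = 1 ∧ ∀ x : E, P x = ⟪v, x⟫_ℂ • v

/-- An expectation representation: a measurable space `Λ`, a convex-linear map `μ`
from density operators to probability measures on `Λ`, and a map `F` from rank-1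
projections to measurable `[0,1]`-valued functions, with `Tr(ρE) = ∫ F(E) dμ(ρ)`. -/
def HasExpectationRepresentation (E : Type*) [NormedAddCommGroup E]
    [InnerProductSpace ℂ E] : Prop :=
  ∃ (Λ : Type) (_ : MeasurableSpace Λ) (μ : (E →ₗ[ℂ] E) → Measure Λ)
    (F : (E →ₗ[ℂ] E) → Λ → ℝ),
    (∀ ρ, DensityOp ρ → IsProbabilityMeasure (μ ρ)) ∧
    (∀ (a : ℝ) (ρ₁ ρ₂ : E →ₗ[ℂ] E), 0 ≤ a → a ≤ 1 → DensityOp ρ₁ → DensityOp ρ₂ →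
      μ (a • ρ₁ + (1 - a) • ρ₂)
        = (ENNReal.ofReal a) • μ ρ₁ + (ENNReal.ofReal (1 - a)) • μ ρ₂) ∧
    (∀ P, RankOneProj P → Measurable (F P) ∧ ∀ lam, F P lam ∈ Set.Icc (0 : ℝ) 1) ∧
    (∀ ρ P, DensityOp ρ → RankOneProj P →
      LinearMap.trace ℂ E (ρ ∘ₗ P) = ((∫ lam, F P lam ∂(μ ρ) : ℝ) : ℂ))

section Aux

variable {H' : Type*} [NormedAddCommGroup H'] [InnerProductSpace ℂ H']
  [FiniteDimensional ℂ H'] (K : Submodule ℂ H')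

/-- Extend an operator on `K` to `H'` by `i ∘ T ∘ p`. -/
noncomputable def liftOp (T : K →ₗ[ℂ] K) : H' →ₗ[ℂ] H' :=
  K.subtype ∘ₗ T ∘ₗ K.orthogonalProjectionOnto.toLinearMap

lemma liftOp_apply (T : K →ₗ[ℂ] K) (x : H') :
    liftOp K T x = (T (K.orthogonalProjectionOnto x) : H') := rfl

lemma inner_proj_eq (u : K) (x : H') :
    ⟪(u : H'), x⟫_ℂ = ⟪u, K.orthogonalProjectionOnto x⟫_ℂ := by
  have h : ⟪x - (K.orthogonalProjectionOnto x : H'), (u:H')⟫_ℂ = 0 :=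
    K.starProjection_inner_eq_zero x u u.2
  have h1 := inner_conj_symm (𝕜 := ℂ) (u:H') (x - (K.orthogonalProjectionOnto x : H'))
  rw [h] at h1
  simp only [map_zero] at h1
  rw [inner_sub_right] at h1
  exact sub_eq_zero.mp h1.symm

lemma liftOp_comp (S T : K →ₗ[ℂ] K) :
    liftOp K S ∘ₗ liftOp K T = liftOp K (S ∘ₗ T) := by
  ext x
  simp [liftOp_apply, Submodule.orthogonalProjectionOnto_mem_subspace_eq_self]

lemma trace_liftOp (T : K →ₗ[ℂ] K) :
    LinearMap.trace ℂ H' (liftOp K T) = LinearMap.trace ℂ K T := by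
  unfold liftOp
  rw [LinearMap.trace_comp_comm']
  congr 1
  ext x
  simp [Submodule.orthogonalProjectionOnto_mem_subspace_eq_self]

set_option synthInstance.maxHeartbeats 1000000 in
lemma liftOp_convex (a : ℝ) (ρ₁ ρ₂ : K →ₗ[ℂ] K) :
    liftOp K (a • ρ₁ + (1 - a) • ρ₂) = a • liftOp K ρ₁ + (1 - a) • liftOp K ρ₂ := by
  ext x
  simp [liftOp_apply]

lemma densityOp_liftOp {ρ : K →ₗ[ℂ] K} (hρ : DensityOp ρ) : DensityOp (liftOp K ρ) := by
  obtain ⟨hsym, hpos, htr⟩ := hρ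
  refine ⟨?_, ?_, ?_⟩
  · intro x y
    rw [liftOp_apply, liftOp_apply]
    calc ⟪(ρ (K.orthogonalProjectionOnto x) : H'), y⟫_ℂ
        = ⟪ρ (K.orthogonalProjectionOnto x), K.orthogonalProjectionOnto y⟫_ℂ :=
          inner_proj_eq K _ y
      _ = ⟪K.orthogonalProjectionOnto x, ρ (K.orthogonalProjectionOnto y)⟫_ℂ := hsym _ _
      _ = (starRingEnd ℂ) ⟪ρ (K.orthogonalProjectionOnto y), K.orthogonalProjectionOnto x⟫_ℂ :=
          (inner_conj_symm _ _).symm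
      _ = (starRingEnd ℂ) ⟪(ρ (K.orthogonalProjectionOnto y) : H'), x⟫_ℂ := by
          rw [inner_proj_eq K _ x]
      _ = ⟪x, (ρ (K.orthogonalProjectionOnto y) : H')⟫_ℂ := inner_conj_symm _ _
  · intro x
    rw [liftOp_apply]
    calc (0:ℂ) ≤ ⟪K.orthogonalProjectionOnto x, ρ (K.orthogonalProjectionOnto x)⟫_ℂ := hpos _
      _ = (starRingEnd ℂ) ⟪ρ (K.orthogonalProjectionOnto x), K.orthogonalProjectionOnto x⟫_ℂ :=
          (inner_conj_symm _ _).symm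
      _ = (starRingEnd ℂ) ⟪(ρ (K.orthogonalProjectionOnto x) : H'), x⟫_ℂ := by
          rw [inner_proj_eq K _ x]
      _ = ⟪x, (ρ (K.orthogonalProjectionOnto x) : H')⟫_ℂ := inner_conj_symm _ _
  · rw [trace_liftOp, htr]

lemma rankOneProj_liftOp {P : K →ₗ[ℂ] K} (hP : RankOneProj P) : RankOneProj (liftOp K P) := by
  obtain ⟨v, hv, hvP⟩ := hP
  refine ⟨(v : H'), by simpa using hv, fun x => ?_⟩
  rw [liftOp_apply, hvP, inner_proj_eq K v x]
  rfl

end Aux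

/-- First bootstrapping theorem: if a (finite-dimensional, hence closed)
subspace `K` sits inside `H'` and `H'` has an expectation representation, then so
does `K`. -/
theorem expectationRepresentation_of_subspace {H' : Type*} [NormedAddCommGroup H']
    [InnerProductSpace ℂ H'] [FiniteDimensional ℂ H'] (K : Submodule ℂ H')
    (h : HasExpectationRepresentation H') : HasExpectationRepresentation K := by
  obtain ⟨Λ, mΛ, μ, F, hprob, hconv, hF, htr⟩ := h
  refine ⟨Λ, mΛ, fun ρ => μ (liftOp K ρ), fun P => F (liftOp K P), ?_, ?_, ?_, ?_⟩
  · intro ρ hρ; exact hprob _ (densityOp_liftOp K hρ)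
  · intro a ρ₁ ρ₂ ha0 ha1 h1 h2
    set_option synthInstance.maxHeartbeats 1000000 in
      show μ (liftOp K (a • ρ₁ + (1 - a) • ρ₂)) = _
    rw [liftOp_convex]
    exact hconv a _ _ ha0 ha1 (densityOp_liftOp K h1) (densityOp_liftOp K h2)
  · intro P hP; exact hF _ (rankOneProj_liftOp K hP)
  · intro ρ P hρ hP
    have := htr (liftOp K ρ) (liftOp K P) (densityOp_liftOp K hρ) (rankOneProj_liftOp K hP)
    rw [liftOp_comp, trace_liftOp] at this
    exact this
end
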